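/- Let n, b, c, l, m₁ be positive integers with m₁ − 1 < n/c ≤ m₁ < n/b < m₁ + 1, and suppose l ≥ 3 is the smallest integer such that [ln/c, ln/b) contains at least 4 integers. Then lm₁ − 4 < ln/c < ln/b < lm₁ + 4, and consequently l < 8bc/((c−b)n). -/

import Mathlib

theorem minimal_l_bounds (n b c l : ℕ) (m₁ : ℤ) (hn : 0 < n) (hb : 0 < b)
    (hbc : b < c) (hcn : c ≤ n)
    (h1 : (m₁ : ℚ) - 1 < (n : ℚ) / c) (h2 : (n : ℚ) / c ≤ (m₁ : ℚ))
    (h3 : (m₁ : ℚ) < (n : ℚ) / b) (h4 : (n : ℚ) / b < (m₁ : ℚ) + 1)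
    (hl : 3 ≤ l)
    (hl4 : 4 ≤ (Finset.Ico ⌈((l : ℚ) * n) / c⌉ ⌈((l : ℚ) * n) / b⌉).card)
    (hmin : ∀ l' : ℕ, 0 < l' → l' < l →
      (Finset.Ico ⌈((l' : ℚ) * n) / c⌉ ⌈((l' : ℚ) * n) / b⌉).card < 4) :
    ((l : ℚ) * m₁ - 4 < ((l : ℚ) * n) / c ∧ ((l : ℚ) * n) / b < (l : ℚ) * m₁ + 4) ∧
      (l : ℚ) < 8 * b * c / (((c : ℚ) - b) * n) := by
  have hb' : (0:ℚ) < b := by exact_mod_cast hb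
  have hc' : (0:ℚ) < c := by exact_mod_cast hb.trans hbc
  have hn' : (0:ℚ) < n := by exact_mod_cast hn
  have hcb' : (0:ℚ) < (c:ℚ) - b := by
    have : (b:ℚ) < c := by exact_mod_cast hbc
    linarith
  set k := l - 1 with hk
  have hkl : k < l := by omega
  have hk0 : 0 < k := by omega
  have hl' : (l:ℚ) = (k:ℚ) + 1 := by
    have : k + 1 = l := by omega
    rw [← this]; push_cast; ring
  have hcard := hmin k hk0 hkl
  set x : ℚ := ((k:ℚ) * n) / c with hx
  set y : ℚ := ((k:ℚ) * n) / b with hy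
  rw [Int.card_Ico] at hcard
  have hcard' : ⌈y⌉ - ⌈x⌉ ≤ 3 := by omega
  have hk' : (0:ℚ) < (k:ℚ) := by exact_mod_cast hk0
  have hxm : x ≤ (k:ℚ) * m₁ := by
    rw [hx, mul_div_assoc]
    exact mul_le_mul_of_nonneg_left h2 hk'.le
  have hym : (k:ℚ) * m₁ < y := by
    rw [hy, mul_div_assoc]
    exact mul_lt_mul_of_pos_left h3 hk'
  have hceilx : ⌈x⌉ ≤ (k:ℤ) * m₁ := Int.ceil_le.mpr (by push_cast; exact hxm)
  have hceily : (k:ℤ) * m₁ < ⌈y⌉ := Int.lt_ceil.mpr (by push_cast; exact hym)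
  -- ceil bounds in ℚ
  have hA : (k:ℚ) * m₁ - 2 ≤ (⌈x⌉:ℚ) := by
    have : (k:ℤ) * m₁ - 2 ≤ ⌈x⌉ := by omega
    exact_mod_cast this
  have hB : (⌈y⌉:ℚ) ≤ (k:ℚ) * m₁ + 3 := by
    have : ⌈y⌉ ≤ (k:ℤ) * m₁ + 3 := by omega
    exact_mod_cast this
  have hx1 : (⌈x⌉:ℚ) < x + 1 := Int.ceil_lt_add_one x
  have hy1 : y ≤ (⌈y⌉:ℚ) := Int.le_ceil y
  have hlc : ((l:ℚ) * n) / c = x + (n:ℚ) / c := by rw [hl', hx]; ring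
  have hlb : ((l:ℚ) * n) / b = y + (n:ℚ) / b := by rw [hl', hy]; ring
  have hlow : (l:ℚ) * m₁ - 4 < ((l:ℚ) * n) / c := by
    rw [hlc, hl']; linarith
  have hhigh : ((l:ℚ) * n) / b < (l:ℚ) * m₁ + 4 := by
    rw [hlb, hl']; linarith
  refine ⟨⟨hlow, hhigh⟩, ?_⟩
  have hdiff : ((l:ℚ) * n) / b - ((l:ℚ) * n) / c < 8 := by linarith
  rw [lt_div_iff₀ (by positivity)]
  have hkey : (((l:ℚ) * n) / b - ((l:ℚ) * n) / c) * (b * c) = (l:ℚ) * (((c:ℚ) - b) * n) := by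
    field_simp
  nlinarith [mul_lt_mul_of_pos_right hdiff (mul_pos hb' hc')]
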